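/- Let f : ℝⁿ → ℝ be convex, and for 1 ≤ k ≤ n let S^k(f) := {x : the subdifferential ∂f(x) has affine dimension ≥ k}. Then S^k(f) has Hausdorff dimension at most n - k; in particular the set of points of non-differentiability S¹(f) has Lebesgue measure zero. -/

import Mathlib

open MeasureTheory Set Module Function TopologicalSpace
open scoped RealInnerProductSpace ENNReal NNReal

noncomputable section

variable {n : ℕ}
local notation "Euc" => EuclideanSpace ℝ (Fin n)

lemma subdiff_convex (f : Euc → ℝ) (x : Euc) :
    Convex ℝ {v : Euc | ∀ z, f x + ⟪v, z - x⟫ ≤ f z} := by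
  intro u hu w hw a b ha hb hab
  intro z
  have h1 := hu z
  have h2 := hw z
  have : ⟪a • u + b • w, z - x⟫ = a * ⟪u, z - x⟫ + b * ⟪w, z - x⟫ := by
    rw [inner_add_left, real_inner_smul_left, real_inner_smul_left]
  rw [this]
  have h5 : a * f z + b * f z = f z := by rw [← add_mul, hab, one_mul]
  have h6 : a * f x + b * f x = f x := by rw [← add_mul, hab, one_mul]
  nlinarith [mul_le_mul_of_nonneg_left h1 ha, mul_le_mul_of_nonneg_left h2 hb]

lemma subdiff_mono (f : Euc → ℝ) (x y u w : Euc)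
    (hu : ∀ z, f x + ⟪u, z - x⟫ ≤ f z) (hw : ∀ z, f y + ⟪w, z - y⟫ ≤ f z) :
    0 ≤ ⟪u - w, x - y⟫ := by
  have h1 := hu y
  have h2 := hw x
  have h3 : ⟪u, y - x⟫ = -⟪u, x - y⟫ := by
    rw [show y - x = -(x - y) by abel, inner_neg_right]
  have h4 : ⟪u - w, x - y⟫ = ⟪u, x - y⟫ - ⟪w, x - y⟫ := inner_sub_left _ _ _
  linarith

lemma dimH_le_of_graph (E : Submodule ℝ Euc)
    (s : Set Euc) (C : ℝ) (hC : 0 ≤ C)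
    (h : ∀ x ∈ s, ∀ y ∈ s,
      ‖(E.orthogonalProjection (x - y) : Euc)‖ ≤
        C * ‖(x - y) - (E.orthogonalProjection (x - y) : Euc)‖) :
    dimH s ≤ ((n - finrank ℝ E : ℕ) : ℝ≥0∞) := by
  classical
  set Q : Euc → Euc :=
    fun x => x - (E.orthogonalProjection x : Euc) with hQ
  have hQsub : ∀ x y, Q x - Q y = (x - y) - (E.orthogonalProjection (x - y) : Euc) := by
    intro x y; simp only [hQ, map_sub]; push_cast; abel
  have key : ∀ x ∈ s, ∀ y ∈ s, ‖x - y‖ ≤ (C + 1) * ‖Q x - Q y‖ := by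
    intro x hx y hy
    have h1 := h x hx y hy
    have h2 : ‖x - y‖ ≤ ‖(E.orthogonalProjection (x - y) : Euc)‖ +
        ‖(x - y) - (E.orthogonalProjection (x - y) : Euc)‖ := by
      have := norm_add_le ((E.orthogonalProjection (x - y) : Euc))
        ((x - y) - (E.orthogonalProjection (x - y) : Euc))
      simpa using this
    rw [hQsub]
    nlinarith [norm_nonneg ((x - y) - (E.orthogonalProjection (x - y) : Euc))]
  have hinj : InjOn Q s := by
    intro x hx y hy hxy
    have h0 := key x hx y hy
    rw [hxy, sub_self, norm_zero, mul_zero] at h0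
    have : ‖x - y‖ = 0 := le_antisymm h0 (norm_nonneg _)
    rwa [norm_sub_eq_zero_iff] at this
  set g := invFunOn Q s with hg
  set t := Q '' s with ht
  have hgmem : ∀ p ∈ t, g p ∈ s ∧ Q (g p) = p := fun p hp => ⟨invFunOn_mem hp, invFunOn_eq hp⟩
  have hlip : LipschitzOnWith (⟨C + 1, by linarith⟩) g t := by
    apply LipschitzOnWith.of_dist_le_mul
    intro p hp q hq
    obtain ⟨hps, hpe⟩ := hgmem p hp
    obtain ⟨hqs, hqe⟩ := hgmem q hq
    have := key (g p) hps (g q) hqs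
    rw [hpe, hqe] at this
    rw [dist_eq_norm, dist_eq_norm]; exact this
  have hsub : s ⊆ g '' t := by
    intro x hx
    have hQx : Q x ∈ t := ⟨x, hx, rfl⟩
    obtain ⟨hgs, hge⟩ := hgmem _ hQx
    exact ⟨Q x, hQx, (hinj hx hgs (by rw [hge])).symm⟩
  have h1 : dimH s ≤ dimH t := le_trans (dimH_mono hsub) (hlip.dimH_image_le)
  have h2 : t ⊆ (Eᗮ : Set Euc) := by
    rintro _ ⟨x, -, rfl⟩
    exact Submodule.sub_starProjection_mem_orthogonal x
  have hiso : Isometry (Subtype.val : Eᗮ → Euc) := isometry_subtype_coe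
  have hcoe : t = (Subtype.val : Eᗮ → Euc) '' (Subtype.val ⁻¹' t) := by
    rw [Set.image_preimage_eq_inter_range, Subtype.range_coe]
    exact (Set.inter_eq_left.mpr h2).symm
  have h3 : dimH t ≤ ((n - finrank ℝ E : ℕ) : ℝ≥0∞) := by
    calc dimH t = dimH ((Subtype.val : Eᗮ → Euc) ''
            (Subtype.val ⁻¹' t)) := by rw [← hcoe]
      _ = dimH (Subtype.val ⁻¹' t : Set Eᗮ) := hiso.dimH_image _
      _ ≤ dimH (univ : Set Eᗮ) := dimH_mono (subset_univ _)
      _ = (finrank ℝ Eᗮ : ℝ≥0∞) := Real.dimH_univ_eq_finrank ↥Eᗮ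
      _ = ((n - finrank ℝ E : ℕ) : ℝ≥0∞) := by
          congr 1
          have := Submodule.finrank_add_finrank_orthogonal (K := E)
          rw [finrank_euclideanSpace_fin] at this
          omega
  exact le_trans h1 h3

lemma exists_ball_in_convex {k : ℕ} (hk : 1 ≤ k) (K : Set Euc)
    (hKc : Convex ℝ K) (hdim : k ≤ finrank ℝ (affineSpan ℝ K).direction) :
    ∃ (v : Fin k → Euc), Orthonormal ℝ v ∧
      ∃ c ∈ K, ∃ r : ℝ, 0 < r ∧
        ∀ w ∈ Submodule.span ℝ (Set.range v), ‖w‖ ≤ r → c + w ∈ K := by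
  classical
  have hKne : K.Nonempty := by
    by_contra hne
    rw [Set.not_nonempty_iff_eq_empty] at hne
    subst hne
    rw [AffineSubspace.span_empty] at hdim
    rw [AffineSubspace.direction_bot] at hdim
    rw [finrank_bot] at hdim
    omega
  set D := (affineSpan ℝ K).direction with hD
  have : FiniteDimensional ℝ D := inferInstance
  set b := stdOrthonormalBasis ℝ D with hb
  have hcard : k ≤ finrank ℝ D := hdim
  set v : Fin k → Euc :=
    fun i => (b (Fin.castLE hcard i) : Euc) with hv
  have hvon : Orthonormal ℝ v := by
    have h1 : Orthonormal ℝ (b ∘ Fin.castLE hcard) :=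
      b.orthonormal.comp _ (Fin.castLE_injective _)
    exact h1.comp_linearIsometry D.subtypeₗᵢ
  have hvmem : ∀ i, v i ∈ D := fun i => (b (Fin.castLE hcard i)).2
  have hspan : Submodule.span ℝ (Set.range v) ≤ D := by
    rw [Submodule.span_le]; rintro _ ⟨i, rfl⟩; exact hvmem i
  obtain ⟨c, hc⟩ := hKne.intrinsicInterior hKc
  rw [intrinsicInterior] at hc
  obtain ⟨y, hy, hyc⟩ := hc
  rw [mem_interior_iff_mem_nhds, Metric.mem_nhds_iff] at hy
  obtain ⟨ε, hε, hball⟩ := hy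
  refine ⟨v, hvon, c, ?_, ε / 2, by linarith, ?_⟩
  · have := hball (Metric.mem_ball_self hε)
    rwa [Set.mem_preimage, hyc] at this
  · intro w hw hwn
    have hwD : w ∈ D := hspan hw
    have hcspan : c ∈ affineSpan ℝ K := by rw [← hyc]; exact y.2
    have hcw : c + w ∈ affineSpan ℝ K := by
      have := AffineSubspace.vadd_mem_of_mem_direction hwD hcspan
      simpa [vadd_eq_add, add_comm] using this
    have : (⟨c + w, hcw⟩ : affineSpan ℝ K) ∈ Metric.ball y ε := by
      rw [Metric.mem_ball, Subtype.dist_eq, hyc]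
      simp only [dist_eq_norm]
      have : c + w - c = w := by abel
      rw [this]
      linarith
    have := hball this
    rwa [Set.mem_preimage] at this

lemma volume_zero_of_dimH_lt' {s : Set Euc}
    (h : dimH s < (n : ℝ≥0∞)) : volume s = 0 := by
  set e := (MeasurableEquiv.toLp 2 (Fin n → ℝ)).symm with he
  have hlip : LipschitzWith 1 ⇑e := by
    exact PiLp.lipschitzWith_ofLp 2 _
  have hdim : dimH (⇑e '' s) < (n : ℝ≥0∞) := lt_of_le_of_lt (hlip.dimH_image_le s) h
  have habs : (volume : Measure (Fin n → ℝ)) ≪ μH[(n : ℝ≥0)] := by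
    have : (μH[((n : ℝ≥0) : ℝ)] : Measure (Fin n → ℝ)) = volume := by
      have := hausdorffMeasure_pi_real (ι := Fin n)
      simpa using this
    rw [show ((n : ℝ≥0) : ℝ) = (n : ℝ) by norm_num] at this
    rw [← this]
    exact Measure.AbsolutelyContinuous.rfl
  have h0 : volume (⇑e '' s) = 0 := by
    refine measure_zero_of_dimH_lt habs ?_
    simpa using hdim
  obtain ⟨t, hts, htm, ht0⟩ := exists_measurable_superset_of_null h0
  have hsub : s ⊆ ⇑e ⁻¹' t := fun x hx => hts ⟨x, hx, rfl⟩
  have hpre : volume (⇑e ⁻¹' t) = 0 := by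
    rw [(EuclideanSpace.volume_preserving_symm_measurableEquiv_toLp (Fin n)).measure_preimage
      htm.nullMeasurableSet]
    exact ht0
  exact measure_mono_null hsub hpre

lemma coeff_le_norm {k : ℕ} (v : Fin k → Euc) (hvon : Orthonormal ℝ v)
    (t : Fin k → ℝ) (i : Fin k) : |t i| ≤ ‖∑ j, t j • v j‖ := by
  have h1 : ⟪v i, ∑ j, t j • v j⟫ = t i := hvon.inner_right_fintype t i
  calc |t i| = |⟪v i, ∑ j, t j • v j⟫| := by rw [h1]
    _ ≤ ‖v i‖ * ‖∑ j, t j • v j‖ := abs_real_inner_le_norm _ _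
    _ = ‖∑ j, t j • v j‖ := by rw [hvon.1 i, one_mul]

lemma approx_bound {k : ℕ} (v q : Fin k → Euc) (hvon : Orthonormal ℝ v)
    (ε : ℝ) (hq : ∀ i, ‖q i - v i‖ ≤ ε) (t : Fin k → ℝ) :
    ‖∑ i, t i • q i - ∑ i, t i • v i‖ ≤ ε * (k * ‖∑ j, t j • v j‖) := by
  have h1 : ∑ i, t i • q i - ∑ i, t i • v i = ∑ i, t i • (q i - v i) := by
    rw [← Finset.sum_sub_distrib]
    congr 1 with i
    rw [smul_sub]
  rw [h1]
  calc ‖∑ i, t i • (q i - v i)‖ ≤ ∑ i, ‖t i • (q i - v i)‖ := norm_sum_le _ _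
    _ = ∑ i, |t i| * ‖q i - v i‖ := by
        congr 1 with i; rw [norm_smul, Real.norm_eq_abs]
    _ ≤ ∑ _i : Fin k, ‖∑ j, t j • v j‖ * ε := by
        apply Finset.sum_le_sum
        intro i _
        exact mul_le_mul (coeff_le_norm v hvon t i) (hq i) (norm_nonneg _) (norm_nonneg _)
    _ = ε * (k * ‖∑ j, t j • v j‖) := by
        rw [Finset.sum_const, Finset.card_univ, Fintype.card_fin, nsmul_eq_mul]
        ring


set_option maxHeartbeats 1000000 in
theorem dimH_stratum_le (f : Euc → ℝ) (k : ℕ) (hk1 : 1 ≤ k) :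
    dimH {x : Euc | k ≤ finrank ℝ
        (affineSpan ℝ {v : Euc | ∀ z, f x + ⟪v, z - x⟫ ≤ f z}).direction} ≤
      ((n - k : ℕ) : ℝ≥0∞) := by
  classical
  set d : ℕ → Euc := denseSeq Euc with hdd
  have hd : DenseRange d := denseRange_denseSeq Euc
  set A : ((Fin k → ℕ) × ℕ × ℕ × ℕ) → Set Euc := fun p =>
    {x | finrank ℝ (Submodule.span ℝ (Set.range fun i => d (p.1 i))) = k ∧
      ∀ ee ∈ Submodule.span ℝ (Set.range fun i => d (p.1 i)), ‖ee‖ = 1 →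
        ((∃ u, (∀ z, f x + ⟪u, z - x⟫ ≤ f z) ∧ ‖u‖ ≤ (p.2.2.2 : ℝ) ∧
            ⟪u, ee⟫ ≤ ⟪d p.2.1, ee⟫ - 1 / (p.2.2.1 + 1)) ∧
         (∃ u, (∀ z, f x + ⟪u, z - x⟫ ≤ f z) ∧ ‖u‖ ≤ (p.2.2.2 : ℝ) ∧
            ⟪d p.2.1, ee⟫ + 1 / (p.2.2.1 + 1) ≤ ⟪u, ee⟫))} with hA
  have hbound : ∀ p, dimH (A p) ≤ ((n - k : ℕ) : ℝ≥0∞) := by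
    intro p
    rcases Set.eq_empty_or_nonempty (A p) with hAe | ⟨x₀, hx₀⟩
    · rw [hAe, dimH_empty]; exact bot_le
    · have hrk : finrank ℝ (Submodule.span ℝ (Set.range fun i => d (p.1 i))) = k := hx₀.1
      set E := Submodule.span ℝ (Set.range fun i => d (p.1 i)) with hE
      set ρ : ℝ := 1 / ((p.2.2.1 : ℝ) + 1) with hρdef
      have hm1 : (0:ℝ) < (p.2.2.1 : ℝ) + 1 := by positivity
      have hρpos : 0 < ρ := by rw [hρdef]; positivity
      have hρ1 : ((p.2.2.1 : ℝ) + 1) * ρ = 1 := by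
        rw [hρdef]; field_simp
      have hgraph : ∀ x ∈ A p, ∀ y ∈ A p,
          ‖(E.orthogonalProjection (x - y) : Euc)‖ ≤
            ((p.2.2.2 : ℝ) * ((p.2.2.1 : ℝ) + 1)) *
              ‖(x - y) - (E.orthogonalProjection (x - y) : Euc)‖ := by
        intro x hx y hy
        set σ : Euc := (E.orthogonalProjection (x - y) : Euc) with hσdef
        by_cases hσ : σ = 0
        · rw [hσ, norm_zero]; positivity
        · have hσn : 0 < ‖σ‖ := norm_pos_iff.mpr hσ
          set ee : Euc := ‖σ‖⁻¹ • σ with heedef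
          have heeE : ee ∈ E := E.smul_mem _ (SetLike.coe_mem _)
          have hee1 : ‖ee‖ = 1 := by
            rw [heedef, norm_smul, norm_inv, norm_norm, inv_mul_cancel₀ hσn.ne']
          obtain ⟨u₁, hu₁f, hu₁M, hu₁⟩ := (hx.2 ee heeE hee1).1
          obtain ⟨u₂, hu₂f, hu₂M, hu₂⟩ := (hy.2 ee heeE hee1).2
          have hmono := subdiff_mono f x y u₁ u₂ hu₁f hu₂f
          have hdecomp : ⟪u₁ - u₂, x - y⟫ = ⟪u₁ - u₂, σ⟫ + ⟪u₁ - u₂, (x - y) - σ⟫ := by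
            rw [← inner_add_right]
            congr 1
            abel
          have h3 : ⟪u₁ - u₂, σ⟫ = ‖σ‖ * ⟪u₁ - u₂, ee⟫ := by
            conv_lhs => rw [show σ = ‖σ‖ • ee by
              rw [heedef, smul_smul, mul_inv_cancel₀ hσn.ne', one_smul]]
            rw [real_inner_smul_right]
          have h4 : ⟪u₁ - u₂, ee⟫ ≤ -(2 * ρ) := by
            rw [inner_sub_left, hρdef]; linarith
          have h5 : ⟪u₁ - u₂, (x - y) - σ⟫ ≤ (2 * (p.2.2.2 : ℝ)) * ‖(x - y) - σ‖ := by
            calc ⟪u₁ - u₂, (x - y) - σ⟫ ≤ ‖u₁ - u₂‖ * ‖(x - y) - σ‖ :=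
                  real_inner_le_norm _ _
              _ ≤ (2 * (p.2.2.2 : ℝ)) * ‖(x - y) - σ‖ := by
                  apply mul_le_mul_of_nonneg_right _ (norm_nonneg _)
                  calc ‖u₁ - u₂‖ ≤ ‖u₁‖ + ‖u₂‖ := norm_sub_le _ _
                    _ ≤ 2 * (p.2.2.2 : ℝ) := by linarith
          have h6 : ‖σ‖ * ⟪u₁ - u₂, ee⟫ ≤ ‖σ‖ * (-(2 * ρ)) :=
            mul_le_mul_of_nonneg_left h4 hσn.le
          have hkey2 : ρ * ‖σ‖ ≤ (p.2.2.2 : ℝ) * ‖(x - y) - σ‖ := by nlinarith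
          calc ‖σ‖ = (((p.2.2.1 : ℝ) + 1) * ρ) * ‖σ‖ := by rw [hρ1, one_mul]
            _ = ((p.2.2.1 : ℝ) + 1) * (ρ * ‖σ‖) := by ring
            _ ≤ ((p.2.2.1 : ℝ) + 1) * ((p.2.2.2 : ℝ) * ‖(x - y) - σ‖) :=
                mul_le_mul_of_nonneg_left hkey2 hm1.le
            _ = ((p.2.2.2 : ℝ) * ((p.2.2.1 : ℝ) + 1)) * ‖(x - y) - σ‖ := by ring
      have := dimH_le_of_graph E (A p) ((p.2.2.2 : ℝ) * ((p.2.2.1 : ℝ) + 1))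
        (by positivity) hgraph
      rwa [hrk] at this
  have hcover : {x : Euc | k ≤ finrank ℝ
      (affineSpan ℝ {v : Euc | ∀ z, f x + ⟪v, z - x⟫ ≤ f z}).direction} ⊆ ⋃ p, A p := by
    intro x hx
    simp only [Set.mem_setOf_eq] at hx
    obtain ⟨v, hvon, c₀, hc₀K, r, hr, hball⟩ :=
      exists_ball_in_convex hk1 _ (subdiff_convex f x) hx
    set ε : ℝ := 1 / (16 * (k + 1)) with hεdef
    have hεpos : 0 < ε := by rw [hεdef]; positivity
    have hεk : ε * k ≤ 1 / 16 := by
      rw [hεdef]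
      rw [div_mul_eq_mul_div, one_mul, div_le_div_iff₀ (by positivity) (by norm_num)]
      push_cast
      nlinarith [Nat.cast_nonneg (α := ℝ) k]
    obtain ⟨m, hm⟩ := exists_nat_one_div_lt (show (0:ℝ) < r/8 by linarith)
    have ha : ∀ i, ∃ j : ℕ, dist (v i) (d j) < ε := fun i => hd.exists_dist_lt _ hεpos
    choose a haa using ha
    obtain ⟨bb, hbb⟩ := hd.exists_dist_lt c₀ (show (0:ℝ) < r/8 by linarith)
    obtain ⟨M, hM⟩ := exists_nat_ge (‖c₀‖ + r)
    set q : Fin k → Euc := fun i => d (a i) with hqdef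
    have hqv : ∀ i, ‖q i - v i‖ ≤ ε := by
      intro i
      rw [← dist_eq_norm, dist_comm]
      exact (haa i).le
    -- the key quantitative facts
    have key : ∀ t : Fin k → ℝ,
        ‖∑ i, t i • q i - ∑ i, t i • v i‖ ≤ (1/16) * ‖∑ j, t j • v j‖ := by
      intro t
      calc ‖∑ i, t i • q i - ∑ i, t i • v i‖ ≤ ε * (k * ‖∑ j, t j • v j‖) :=
            approx_bound v q hvon ε hqv t
        _ = (ε * k) * ‖∑ j, t j • v j‖ := by ring
        _ ≤ (1/16) * ‖∑ j, t j • v j‖ :=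
            mul_le_mul_of_nonneg_right hεk (norm_nonneg _)
    -- linear independence of q
    have hli : LinearIndependent ℝ q := by
      rw [Fintype.linearIndependent_iff]
      intro g hg
      have hT : ‖∑ j, g j • v j‖ ≤ (1/16) * ‖∑ j, g j • v j‖ := by
        have hkg := key g
        rw [hg, zero_sub, norm_neg] at hkg
        exact hkg
      have hT0 : ‖∑ j, g j • v j‖ = 0 := by nlinarith [norm_nonneg (∑ j, g j • v j)]
      intro i
      have := coeff_le_norm v hvon g i
      rw [hT0] at this
      exact abs_eq_zero.mp (le_antisymm this (abs_nonneg _))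
    have hrk : finrank ℝ (Submodule.span ℝ (Set.range q)) = k := by
      rw [finrank_span_eq_card hli, Fintype.card_fin]
    suffices hmem : x ∈ A (a, bb, m, M) by exact Set.mem_iUnion.mpr ⟨_, hmem⟩
    refine ⟨hrk, ?_⟩
    intro ee heeE hee1
    rw [Submodule.mem_span_range_iff_exists_fun] at heeE
    obtain ⟨t, ht⟩ := heeE
    have hteq : ∑ i, t i • q i = ee := ht
    set w : Euc := ∑ j, t j • v j with hwdef
    set T : ℝ := ‖w‖ with hTdef
    have hdiff : ‖ee - w‖ ≤ (1/16) * T := by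
      have hk2 := key t
      rw [hteq] at hk2
      exact hk2
    have hT0 : (0:ℝ) ≤ T := norm_nonneg _
    have hT1 : 16/17 ≤ T := by
      have h1 : ‖ee‖ ≤ ‖w‖ + ‖ee - w‖ := by
        calc ‖ee‖ = ‖w + (ee - w)‖ := by congr 1; abel
          _ ≤ ‖w‖ + ‖ee - w‖ := norm_add_le _ _
      rw [hee1] at h1
      linarith
    have hTpos : (0:ℝ) < T := by linarith
    have hwspan : w ∈ Submodule.span ℝ (Set.range v) :=
      Submodule.sum_mem _ (fun i _ => Submodule.smul_mem _ _
        (Submodule.subset_span ⟨i, rfl⟩))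
    have hwe : T^2 - T*((1/16)*T) ≤ ⟪w, ee⟫ := by
      have h1 : ⟪w, ee⟫ = ⟪w, w⟫ + ⟪w, ee - w⟫ := by
        rw [← inner_add_right]; congr 1; abel
      have h2 : ⟪w, w⟫ = T^2 := real_inner_self_eq_norm_sq w
      have h3 : |⟪w, ee - w⟫| ≤ T * ((1/16)*T) := by
        calc |⟪w, ee - w⟫| ≤ ‖w‖ * ‖ee - w‖ := abs_real_inner_le_norm _ _
          _ ≤ T * ((1/16)*T) := mul_le_mul_of_nonneg_left hdiff hT0
      have h4 := (abs_le.mp h3).1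
      linarith
    have hcin : ∀ s : ℝ, |s| = r/T →
        (∀ z, f x + ⟪c₀ + s • w, z - x⟫ ≤ f z) ∧ ‖c₀ + s • w‖ ≤ (M:ℝ) := by
      intro s hs
      have hnorm : ‖s • w‖ = r := by
        rw [norm_smul, Real.norm_eq_abs, hs, ← hTdef]
        field_simp
      refine ⟨hball _ (Submodule.smul_mem _ _ hwspan) (le_of_eq hnorm), ?_⟩
      calc ‖c₀ + s • w‖ ≤ ‖c₀‖ + ‖s • w‖ := norm_add_le _ _
        _ = ‖c₀‖ + r := by rw [hnorm]
        _ ≤ (M:ℝ) := hM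
    have hcbb : ⟪c₀, ee⟫ ≤ ⟪d bb, ee⟫ + r/8 ∧ ⟪d bb, ee⟫ - r/8 ≤ ⟪c₀, ee⟫ := by
      have h1 : |⟪c₀ - d bb, ee⟫| ≤ ‖c₀ - d bb‖ * ‖ee‖ := abs_real_inner_le_norm _ _
      rw [hee1, mul_one] at h1
      have h2 : ‖c₀ - d bb‖ < r/8 := by rw [← dist_eq_norm]; exact hbb
      obtain ⟨h3a, h3b⟩ := abs_le.mp h1
      have h4 : ⟪c₀ - d bb, ee⟫ = ⟪c₀, ee⟫ - ⟪d bb, ee⟫ := inner_sub_left _ _ _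
      rw [h4] at h3a h3b
      exact ⟨by linarith, by linarith⟩
    obtain ⟨hcbb1, hcbb2⟩ := hcbb
    have hsT : (r/T) * T = r := by field_simp
    have hinner : (15:ℝ)/17 * r ≤ (r/T) * ⟪w, ee⟫ := by
      have hrT : (0:ℝ) < r/T := div_pos hr hTpos
      have h1 : (r/T) * (T^2 - T*((1/16)*T)) ≤ (r/T) * ⟪w, ee⟫ :=
        mul_le_mul_of_nonneg_left hwe hrT.le
      have h2 : (r/T) * (T^2 - T*((1/16)*T)) = (15/16) * r * T := by
        field_simp; ring
      rw [h2] at h1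
      nlinarith
    have hρ8 : 1/((m:ℝ)+1) < r/8 := hm
    -- the two witnesses
    obtain ⟨hf1, hn1⟩ := hcin (-(r/T)) (by
      rw [abs_neg, abs_of_pos (div_pos hr hTpos)])
    obtain ⟨hf2, hn2⟩ := hcin (r/T) (abs_of_pos (div_pos hr hTpos))
    have hip1 : ⟪c₀ + (-(r/T)) • w, ee⟫ = ⟪c₀, ee⟫ - (r/T) * ⟪w, ee⟫ := by
      rw [inner_add_left, real_inner_smul_left]; ring
    have hip2 : ⟪c₀ + (r/T) • w, ee⟫ = ⟪c₀, ee⟫ + (r/T) * ⟪w, ee⟫ := by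
      rw [inner_add_left, real_inner_smul_left]
    have hfin1 : ⟪c₀ + (-(r/T)) • w, ee⟫ ≤ ⟪d bb, ee⟫ - 1/((m:ℝ)+1) := by
      rw [hip1]; linarith
    have hfin2 : ⟪d bb, ee⟫ + 1/((m:ℝ)+1) ≤ ⟪c₀ + (r/T) • w, ee⟫ := by
      rw [hip2]; linarith
    exact ⟨⟨c₀ + (-(r/T)) • w, hf1, hn1, hfin1⟩, ⟨c₀ + (r/T) • w, hf2, hn2, hfin2⟩⟩
  calc dimH _ ≤ dimH (⋃ p, A p) := dimH_mono hcover
    _ = ⨆ p, dimH (A p) := dimH_iUnion _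
    _ ≤ ((n - k : ℕ) : ℝ≥0∞) := iSup_le hbound

/-- Alberti-type theorem: for convex f : ℝⁿ → ℝ, the set S^k(f) of points where the
subdifferential has affine dimension ≥ k has Hausdorff dimension ≤ n - k; in particular
the non-differentiability set S¹(f) is Lebesgue-null. -/
theorem dimH_subdifferential_strata {n : ℕ}
    (f : EuclideanSpace ℝ (Fin n) → ℝ) (hf : ConvexOn ℝ Set.univ f)
    (k : ℕ) (hk1 : 1 ≤ k) (hkn : k ≤ n) :
    dimH {x : EuclideanSpace ℝ (Fin n) |
        k ≤ Module.finrank ℝ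
          (affineSpan ℝ {v : EuclideanSpace ℝ (Fin n) |
            ∀ z, f x + ⟪v, z - x⟫ ≤ f z}).direction} ≤ (n - k : ℕ) ∧
      volume {x : EuclideanSpace ℝ (Fin n) |
        1 ≤ Module.finrank ℝ
          (affineSpan ℝ {v : EuclideanSpace ℝ (Fin n) |
            ∀ z, f x + ⟪v, z - x⟫ ≤ f z}).direction} = 0 := by
  constructor
  · exact dimH_stratum_le f k hk1
  · have h1 := dimH_stratum_le f 1 le_rfl
    apply volume_zero_of_dimH_lt'
    refine lt_of_le_of_lt h1 ?_
    have hn : 1 ≤ n := le_trans hk1 hkn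
    exact_mod_cast Nat.sub_lt (by omega) (by omega)

end
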